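/- (Rigidity at the special temperature; Corollary cor:bounds.) Suppose A = −B²/(3C) and let (q₁, q₂, q₃) be a solution of (EL123)–(BC123) with q₃ < 0 everywhere in Ω. Then q₃(x,y) = −s₊/6 for every (x,y) ∈ Ω. -/

import Mathlib

open MeasureTheory Set

noncomputable section

/-- `s₊ = (B + √(B² + 24|A|C))/(4C)`. -/
def splus (A B C : ℝ) : ℝ := (B + Real.sqrt (B ^ 2 + 24 * |A| * C)) / (4 * C)

/-- `s₋ = (B − √(B² + 24|A|C))/(4C)`. -/
def sminus (A B C : ℝ) : ℝ := (B - Real.sqrt (B ^ 2 + 24 * |A| * C)) / (4 * C)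

/-- The truncated square `Ω`. -/
def TSq (η : ℝ) : Set (ℝ × ℝ) :=
  {p | |p.1| < 1 - η ∧ |p.2| < 1 - η ∧ |p.1 + p.2| < 1 ∧ |p.1 - p.2| < 1}

/-- Long edge `C₁` on the line `x + y = 1`. -/
def edgeC1 (η : ℝ) : Set (ℝ × ℝ) := {p | p.1 + p.2 = 1 ∧ η ≤ p.1 ∧ p.1 ≤ 1 - η}
/-- Long edge `C₂` on the line `y − x = 1`. -/
def edgeC2 (η : ℝ) : Set (ℝ × ℝ) := {p | p.2 - p.1 = 1 ∧ -(1 - η) ≤ p.1 ∧ p.1 ≤ -η}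
/-- Long edge `C₃` on the line `x + y = −1`. -/
def edgeC3 (η : ℝ) : Set (ℝ × ℝ) := {p | p.1 + p.2 = -1 ∧ -(1 - η) ≤ p.1 ∧ p.1 ≤ -η}
/-- Long edge `C₄` on the line `x − y = 1`. -/
def edgeC4 (η : ℝ) : Set (ℝ × ℝ) := {p | p.1 - p.2 = 1 ∧ η ≤ p.1 ∧ p.1 ≤ 1 - η}
/-- Short edge `S₁`, `x = 1 − η`. -/
def edgeS1 (η : ℝ) : Set (ℝ × ℝ) := {p | p.1 = 1 - η ∧ |p.2| ≤ η}
/-- Short edge `S₂`, `y = 1 − η`. -/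
def edgeS2 (η : ℝ) : Set (ℝ × ℝ) := {p | p.2 = 1 - η ∧ |p.1| ≤ η}
/-- Short edge `S₃`, `x = −(1 − η)`. -/
def edgeS3 (η : ℝ) : Set (ℝ × ℝ) := {p | p.1 = -(1 - η) ∧ |p.2| ≤ η}
/-- Short edge `S₄`, `y = −(1 − η)`. -/
def edgeS4 (η : ℝ) : Set (ℝ × ℝ) := {p | p.2 = -(1 - η) ∧ |p.1| ≤ η}

/-- The interpolating boundary function `g₀(s) = s₊ s/(2η)`. -/
def g0 (A B C η s : ℝ) : ℝ := splus A B C * s / (2 * η)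

/-- The two-dimensional Laplacian: sum of the two second partial derivatives. -/
def lap2 (q : ℝ × ℝ → ℝ) (p : ℝ × ℝ) : ℝ :=
  deriv (deriv fun x => q (x, p.2)) p.1 + deriv (deriv fun y => q (p.1, y)) p.2

/-- `|∇q|²` in two dimensions. -/
def gradSq2 (q : ℝ × ℝ → ℝ) (p : ℝ × ℝ) : ℝ :=
  (deriv (fun x => q (x, p.2)) p.1) ^ 2 + (deriv (fun y => q (p.1, y)) p.2) ^ 2

/-- The Dirichlet boundary condition `q₁ = q₁b` on `∂Ω`. -/
def BC1 (A B C η : ℝ) (q1 : ℝ × ℝ → ℝ) : Prop :=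
  (∀ p ∈ edgeC1 η ∪ edgeC3 η, q1 p = -(splus A B C) / 2) ∧
  (∀ p ∈ edgeC2 η ∪ edgeC4 η, q1 p = splus A B C / 2) ∧
  (∀ p ∈ edgeS1 η ∪ edgeS3 η, q1 p = g0 A B C η p.2) ∧
  (∀ p ∈ edgeS2 η ∪ edgeS4 η, q1 p = g0 A B C η p.1)

/-- A solution of the system (EL123) with boundary conditions (BC123):
a triple of functions in `C²(Ω) ∩ C(Ω̄)` satisfying the three PDEs in `Ω`,
with `q₁ = q₁b`, `q₂ = 0`, `q₃ = −s₊/6` on `∂Ω`. -/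
def IsSolEL123 (A B C L lam η : ℝ) (q1 q2 q3 : ℝ × ℝ → ℝ) : Prop :=
  ContDiffOn ℝ 2 q1 (TSq η) ∧ ContDiffOn ℝ 2 q2 (TSq η) ∧ ContDiffOn ℝ 2 q3 (TSq η) ∧
  ContinuousOn q1 (closure (TSq η)) ∧ ContinuousOn q2 (closure (TSq η)) ∧
  ContinuousOn q3 (closure (TSq η)) ∧
  (∀ p ∈ TSq η, lap2 q1 p =
    lam ^ 2 / L * q1 p *
      (A + 2 * B * q3 p + 2 * C * ((q1 p) ^ 2 + (q2 p) ^ 2 + 3 * (q3 p) ^ 2))) ∧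
  (∀ p ∈ TSq η, lap2 q2 p =
    lam ^ 2 / L * q2 p *
      (A + 2 * B * q3 p + 2 * C * ((q1 p) ^ 2 + (q2 p) ^ 2 + 3 * (q3 p) ^ 2))) ∧
  (∀ p ∈ TSq η, lap2 q3 p =
    lam ^ 2 / L * q3 p *
      (A - B * q3 p + 2 * C * ((q1 p) ^ 2 + (q2 p) ^ 2 + 3 * (q3 p) ^ 2))
      + lam ^ 2 * B / (3 * L) * ((q1 p) ^ 2 + (q2 p) ^ 2)) ∧
  BC1 A B C η q1 ∧
  (∀ p ∈ frontier (TSq η), q2 p = 0) ∧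
  (∀ p ∈ frontier (TSq η), q3 p = -(splus A B C) / 6)


open Filter Topology in
private lemma sd_nonpos' {f : ℝ → ℝ} {a : ℝ} (hf : ContDiffAt ℝ 2 f a) (hmax : IsLocalMax f a) :
    deriv (deriv f) a ≤ 0 := by
  by_contra h
  push_neg at h
  obtain ⟨u, hu, hfu⟩ := hf.contDiffOn le_rfl (by simp)
  obtain ⟨V, hVu, hV, haV⟩ := mem_nhds_iff.1 hu
  have hfV : ContDiffOn ℝ 2 f V := hfu.mono hVu
  have hdiff : DifferentiableOn ℝ f V := hfV.differentiableOn (by norm_num)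
  have hd1 : ContDiffOn ℝ 1 (deriv f) V := hfV.deriv_of_isOpen hV (by norm_num)
  have hdd : DifferentiableAt ℝ (deriv f) a :=
    ((hd1.differentiableOn (by norm_num)) a haV).differentiableAt (hV.mem_nhds haV)
  have hda : deriv f a = 0 := hmax.deriv_eq_zero
  have hslope : Tendsto (slope (deriv f) a) (𝓝[≠] a) (𝓝 (deriv (deriv f) a)) :=
    hasDerivAt_iff_tendsto_slope.1 hdd.hasDerivAt
  have hpos : ∀ᶠ x in 𝓝[≠] a, 0 < slope (deriv f) a x :=
    hslope.eventually (eventually_gt_nhds h)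
  have hall : ∀ᶠ x in 𝓝 a, (f x ≤ f a ∧ x ∈ V) ∧ (x ≠ a → 0 < slope (deriv f) a x) := by
    refine (hmax.and (hV.eventually_mem haV)).and ?_
    simpa [eventually_nhdsWithin_iff] using hpos
  obtain ⟨ε, hε, hball⟩ := Metric.eventually_nhds_iff.1 hall
  have hab : a < a + ε / 2 := by linarith
  have hmem : ∀ x ∈ Icc a (a + ε / 2), dist x a < ε := by
    intro x hx
    have h1 := hx.1
    have h2 := hx.2
    rw [Real.dist_eq, abs_of_nonneg (by linarith)]
    linarith
  have hcont : ContinuousOn f (Icc a (a + ε / 2)) := fun x hx =>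
    ((hdiff.differentiableAt (hV.mem_nhds (hball (hmem x hx)).1.2)).continuousAt).continuousWithinAt
  have hder : ∀ x ∈ interior (Icc a (a + ε / 2)), 0 < deriv f x := by
    intro x hx
    rw [interior_Icc] at hx
    have hxa : a < x := hx.1
    have hs := (hball (hmem x (Ioo_subset_Icc_self hx))).2 (ne_of_gt hxa)
    rw [slope_def_field, hda, sub_zero] at hs
    rcases div_pos_iff.1 hs with ⟨h1, _⟩ | ⟨_, h2⟩
    · exact h1
    · linarith
  have hsm := strictMonoOn_of_deriv_pos (convex_Icc a (a + ε / 2)) hcont hder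
  have h1 := hsm (left_mem_Icc.2 hab.le) (right_mem_Icc.2 hab.le) hab
  have h2 := (hball (hmem (a + ε / 2) (right_mem_Icc.2 hab.le))).1.1
  linarith

open Filter Topology in
private lemma maxpr' {U : Set (ℝ × ℝ)} (hU : IsOpen U) (hb : Bornology.IsBounded U)
    {f : ℝ × ℝ → ℝ} (hf2 : ContDiffOn ℝ 2 f U) (hfc : ContinuousOn f (closure U))
    (hfr : ∀ p ∈ frontier U, f p ≤ 0)
    (hlap : ∀ p ∈ U, 0 < f p → 0 < lap2 f p) :
    ∀ p ∈ U, f p ≤ 0 := by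
  intro p hp
  by_contra hfp
  push_neg at hfp
  have hcpt : IsCompact (closure U) := hb.isCompact_closure
  obtain ⟨z, hzc, hz⟩ := hcpt.exists_isMaxOn ⟨p, subset_closure hp⟩ hfc
  have hpz : 0 < f z := lt_of_lt_of_le hfp (hz (subset_closure hp))
  have hzU : z ∈ U := by
    by_contra hzU
    have hfr' : z ∈ frontier U := by rw [hU.frontier_eq]; exact ⟨hzc, hzU⟩
    linarith [hfr z hfr']
  have hloc : IsLocalMax f z := hz.isLocalMax (mem_of_superset (hU.mem_nhds hzU) subset_closure)
  have hfz : ContDiffAt ℝ 2 f z := hf2.contDiffAt (hU.mem_nhds hzU)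
  have h1 : deriv (deriv fun x => f (x, z.2)) z.1 ≤ 0 := by
    apply sd_nonpos'
    · exact hfz.comp z.1 ((contDiff_id.prodMk contDiff_const).contDiffAt)
    · have hT : Tendsto (fun x : ℝ => (x, z.2)) (𝓝 z.1) (𝓝 z) :=
        ((continuous_id.prodMk continuous_const).tendsto z.1)
      exact hT.eventually hloc
  have h2 : deriv (deriv fun y => f (z.1, y)) z.2 ≤ 0 := by
    apply sd_nonpos'
    · exact hfz.comp z.2 ((contDiff_const.prodMk contDiff_id).contDiffAt)
    · have hT : Tendsto (fun y : ℝ => (z.1, y)) (𝓝 z.2) (𝓝 z) :=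
        ((continuous_const.prodMk continuous_id).tendsto z.2)
      exact hT.eventually hloc
  have := hlap z hzU hpz
  rw [lap2] at this
  linarith

private lemma isOpen_TSq' (η : ℝ) : IsOpen (TSq η) := by
  have h1 : IsOpen {p : ℝ × ℝ | |p.1| < 1 - η} :=
    isOpen_lt (continuous_fst.abs) continuous_const
  have h2 : IsOpen {p : ℝ × ℝ | |p.2| < 1 - η} :=
    isOpen_lt (continuous_snd.abs) continuous_const
  have h3 : IsOpen {p : ℝ × ℝ | |p.1 + p.2| < 1} :=
    isOpen_lt ((continuous_fst.add continuous_snd).abs) continuous_const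
  have h4 : IsOpen {p : ℝ × ℝ | |p.1 - p.2| < 1} :=
    isOpen_lt ((continuous_fst.sub continuous_snd).abs) continuous_const
  exact h1.inter (h2.inter (h3.inter h4))

private lemma bounded_TSq' (η : ℝ) : Bornology.IsBounded (TSq η) := by
  apply (Metric.isBounded_closedBall (x := ((0 : ℝ), (0 : ℝ))) (r := 2)).subset
  rintro p ⟨-, -, ha, hb⟩
  rw [Metric.mem_closedBall, Prod.dist_eq]
  rw [abs_lt] at ha hb
  have e1 : dist p.1 0 ≤ 2 := by
    rw [Real.dist_eq, sub_zero, abs_le]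
    constructor <;> linarith [ha.1, ha.2, hb.1, hb.2]
  have e2 : dist p.2 0 ≤ 2 := by
    rw [Real.dist_eq, sub_zero, abs_le]
    constructor <;> linarith [ha.1, ha.2, hb.1, hb.2]
  exact max_le e1 e2

/-- Corollary cor:bounds: at the special temperature `A = −B²/(3C)`,
any solution of (EL123)–(BC123) with `q₃ < 0` in `Ω` has `q₃ ≡ −s₊/6` in `Ω`. -/
theorem statement_6 (A B C L lam η : ℝ) (hB : 0 < B) (hC : 0 < C)
    (hA : A = -(B ^ 2) / (3 * C))
    (hL : 0 < L) (hlam : 0 < lam) (hη : η ∈ Ioo (0 : ℝ) 1)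
    (q1 q2 q3 : ℝ × ℝ → ℝ) (hsol : IsSolEL123 A B C L lam η q1 q2 q3)
    (hq3 : ∀ p ∈ TSq η, q3 p < 0) :
    ∀ p ∈ TSq η, q3 p = -(splus A B C) / 6 := by
  obtain ⟨hη0, hη1⟩ := hη
  have hsplus : splus A B C = B / C := by
    rw [splus, hA]
    have h9 : B ^ 2 + 24 * |-(B ^ 2) / (3 * C)| * C = (3 * B) ^ 2 := by
      rw [abs_div, abs_neg, abs_of_nonneg (sq_nonneg B),
        abs_of_pos (by positivity : (0 : ℝ) < 3 * C)]
      field_simp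
      ring
    rw [h9, Real.sqrt_sq (by positivity)]
    field_simp
    ring
  obtain ⟨hc1, hc2, hc3, hcc1, hcc2, hcc3, hpde1, hpde2, hpde3, hbc1, hbc2, hbc3⟩ := hsol
  have hfac : ∀ p ∈ TSq η, lap2 q3 p =
      lam ^ 2 / L * (2 * C) * (q3 p + B / (6 * C)) *
        (3 * q3 p * (q3 p - B / (3 * C)) + ((q1 p) ^ 2 + (q2 p) ^ 2)) := by
    intro p hp
    rw [hpde3 p hp, hA]
    field_simp
    ring
  have hbr : ∀ p ∈ TSq η,
      0 < 3 * q3 p * (q3 p - B / (3 * C)) + ((q1 p) ^ 2 + (q2 p) ^ 2) := by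
    intro p hp
    have ht := hq3 p hp
    have h1 : q3 p - B / (3 * C) < 0 := by
      have : 0 < B / (3 * C) := by positivity
      linarith
    nlinarith [sq_nonneg (q1 p), sq_nonneg (q2 p), mul_pos_of_neg_of_neg ht h1]
  have hlapw : ∀ p : ℝ × ℝ, lap2 (fun q => q3 q + B / (6 * C)) p = lap2 q3 p := by
    intro p
    simp only [lap2]
    rw [deriv_add_const' (B / (6 * C)) (f := fun x => q3 (x, p.2)),
      deriv_add_const' (B / (6 * C)) (f := fun y => q3 (p.1, y))]
  have hlapnw : ∀ p : ℝ × ℝ,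
      lap2 (fun q => -(q3 q + B / (6 * C))) p = -lap2 q3 p := by
    intro p
    simp only [lap2]
    rw [deriv.fun_neg' (f := fun x => q3 (x, p.2) + B / (6 * C)),
      deriv.fun_neg' (f := fun y => q3 (p.1, y) + B / (6 * C))]
    have e1 : (fun x => -deriv (fun x => q3 (x, p.2) + B / (6 * C)) x)
        = fun x => -deriv (fun x => q3 (x, p.2)) x := by
      funext x; rw [deriv_add_const]
    have e2 : (fun y => -deriv (fun y => q3 (p.1, y) + B / (6 * C)) y)
        = fun y => -deriv (fun y => q3 (p.1, y)) y := by
      funext y; rw [deriv_add_const]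
    rw [e1, e2, deriv.fun_neg' (f := deriv fun x => q3 (x, p.2)),
      deriv.fun_neg' (f := deriv fun y => q3 (p.1, y))]
    ring
  have hbdry : ∀ p ∈ frontier (TSq η), q3 p + B / (6 * C) = 0 := by
    intro p hp
    rw [hbc3 p hp, hsplus]
    field_simp
    ring
  have hU := isOpen_TSq' η
  have hbd := bounded_TSq' η
  have hw2 : ContDiffOn ℝ 2 (fun q => q3 q + B / (6 * C)) (TSq η) :=
    hc3.add contDiffOn_const
  have hwc : ContinuousOn (fun q => q3 q + B / (6 * C)) (closure (TSq η)) :=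
    hcc3.add continuousOn_const
  have hle : ∀ p ∈ TSq η, q3 p + B / (6 * C) ≤ 0 := by
    refine maxpr' hU hbd hw2 hwc ?_ ?_
    · intro p hp
      exact le_of_eq (hbdry p hp)
    · intro p hp hpos
      rw [hlapw p, hfac p hp]
      have hwp : 0 < q3 p + B / (6 * C) := hpos
      exact mul_pos (mul_pos (by positivity) hwp) (hbr p hp)
  have hge : ∀ p ∈ TSq η, -(q3 p + B / (6 * C)) ≤ 0 := by
    refine maxpr' hU hbd hw2.neg hwc.neg ?_ ?_
    · intro p hp
      simp [hbdry p hp]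
    · intro p hp hpos
      have hwp : q3 p + B / (6 * C) < 0 := by
        have : (0 : ℝ) < -(q3 p + B / (6 * C)) := hpos
        linarith
      rw [hlapnw p, hfac p hp]
      have hneg : lam ^ 2 / L * (2 * C) * (q3 p + B / (6 * C)) *
          (3 * q3 p * (q3 p - B / (3 * C)) + ((q1 p) ^ 2 + (q2 p) ^ 2)) < 0 :=
        mul_neg_of_neg_of_pos (mul_neg_of_pos_of_neg (by positivity) hwp) (hbr p hp)
      linarith
  intro p hp
  have h1 := hle p hp
  have h2 := hge p hp
  have h3 : q3 p = -(B / (6 * C)) := by linarith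
  rw [h3, hsplus]
  ring
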